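/- Let Ω, Ω₁, …, Ωₙ be nonempty closed convex subsets of ℝˢ with Ωᵢ ∩ Ω = ∅ for all i = 1, …, n, and let x̄ ∈ Ω. For each i let aᵢ(x̄) = (x̄ − Π(x̄;Ωᵢ))/d(x̄;Ωᵢ). If −∑_{i=1}^n aᵢ(x̄) ∈ N(x̄;Ω), then x̄ is an optimal solution of the generalized Heron problem, i.e., D(x̄) ≤ D(x) for all x ∈ Ω where D(x) = ∑_{i=1}^n d(x;Ωᵢ). -/

import Mathlib

/-- Sufficiency in Theorem 3.2: if `Ωᵢ ∩ Ω = ∅` for all `i` and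
`-∑ i, aᵢ(xbar) ∈ N(xbar; Ω)`, where `aᵢ(xbar) = (xbar - Π(xbar; Ωᵢ)) / d(xbar; Ωᵢ)`,
then `xbar` solves the generalized Heron problem. -/
theorem heron_optimal_sufficient {s n : ℕ}
    (Ω : Set (EuclideanSpace ℝ (Fin s))) (Ωs : Fin n → Set (EuclideanSpace ℝ (Fin s)))
    (hΩne : Ω.Nonempty) (hΩcl : IsClosed Ω) (hΩcv : Convex ℝ Ω)
    (hne : ∀ i, (Ωs i).Nonempty) (hcl : ∀ i, IsClosed (Ωs i)) (hcv : ∀ i, Convex ℝ (Ωs i))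
    (hdisj : ∀ i, Ωs i ∩ Ω = ∅)
    (xbar : EuclideanSpace ℝ (Fin s)) (hxbar : xbar ∈ Ω)
    (p : Fin n → EuclideanSpace ℝ (Fin s))
    (hp : ∀ i, p i ∈ Ωs i ∧ dist xbar (p i) = Metric.infDist xbar (Ωs i))
    (a : Fin n → EuclideanSpace ℝ (Fin s))
    (ha : ∀ i, a i = (Metric.infDist xbar (Ωs i))⁻¹ • (xbar - p i))
    (hnc : ∀ x ∈ Ω, (inner ℝ (-(∑ i, a i)) (x - xbar) : ℝ) ≤ 0) :
    ∀ x ∈ Ω, ∑ i, Metric.infDist xbar (Ωs i) ≤ ∑ i, Metric.infDist x (Ωs i) := by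
  intro x hx
  have key : ∀ i, Metric.infDist xbar (Ωs i) + (inner ℝ (a i) (x - xbar) : ℝ)
      ≤ Metric.infDist x (Ωs i) := by
    intro i
    have hpi := (hp i).1
    have hdi : dist xbar (p i) = Metric.infDist xbar (Ωs i) := (hp i).2
    have hxnot : xbar ∉ Ωs i := fun h =>
      Set.eq_empty_iff_forall_notMem.1 (hdisj i) xbar ⟨h, hxbar⟩
    have hdpos : 0 < Metric.infDist xbar (Ωs i) :=
      ((hcl i).notMem_iff_infDist_pos (hne i)).1 hxnot
    -- obtuse angle property of projection
    have hproj : ∀ q ∈ Ωs i, (inner ℝ (xbar - p i) (q - p i) : ℝ) ≤ 0 := by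
      have hnorm : ‖xbar - p i‖ = ⨅ z : Ωs i, ‖xbar - z‖ := by
        rw [← dist_eq_norm, hdi, Metric.infDist_eq_iInf]
        simp_rw [dist_eq_norm]
      exact (norm_eq_iInf_iff_real_inner_le_zero (hcv i) hpi).1 hnorm
    have hanorm : ‖a i‖ = 1 := by
      rw [ha i, norm_smul, norm_inv, Real.norm_eq_abs,
        abs_of_pos hdpos, ← dist_eq_norm, hdi, inv_mul_cancel₀ hdpos.ne']
    have h1 : (inner ℝ (a i) (xbar - p i) : ℝ) = Metric.infDist xbar (Ωs i) := by
      rw [ha i, real_inner_smul_left, real_inner_self_eq_norm_sq, ← dist_eq_norm, hdi]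
      field_simp
    have hle : ∀ q ∈ Ωs i,
        Metric.infDist xbar (Ωs i) + (inner ℝ (a i) (x - xbar) : ℝ) ≤ dist x q := by
      intro q hq
      have h3 : (inner ℝ (a i) (q - p i) : ℝ) ≤ 0 := by
        rw [ha i, real_inner_smul_left]
        exact mul_nonpos_of_nonneg_of_nonpos (inv_nonneg.2 hdpos.le) (hproj q hq)
      have h2 : (inner ℝ (a i) (x - q) : ℝ) ≤ ‖x - q‖ := by
        calc (inner ℝ (a i) (x - q) : ℝ) ≤ ‖a i‖ * ‖x - q‖ := real_inner_le_norm _ _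
          _ = ‖x - q‖ := by rw [hanorm, one_mul]
      have hsplit : (inner ℝ (a i) (x - p i) : ℝ)
          = inner ℝ (a i) (x - q) + inner ℝ (a i) (q - p i) := by
        rw [← inner_add_right]
        congr 1
        abel
      have hsum : Metric.infDist xbar (Ωs i) + (inner ℝ (a i) (x - xbar) : ℝ)
          = inner ℝ (a i) (x - p i) := by
        rw [← h1, ← inner_add_right]
        congr 1
        abel
      rw [hsum, hsplit, dist_eq_norm]
      linarith
    by_contra hcon
    push_neg at hcon
    obtain ⟨q, hq, hqlt⟩ := (Metric.infDist_lt_iff (hne i)).1 hcon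
    exact absurd (hle q hq) (not_le.2 hqlt)
  have hsum : ∑ i, Metric.infDist xbar (Ωs i) + (inner ℝ (∑ i, a i) (x - xbar) : ℝ)
      ≤ ∑ i, Metric.infDist x (Ωs i) := by
    have := Finset.sum_le_sum (s := Finset.univ) (fun i _ => key i)
    simpa [Finset.sum_add_distrib, sum_inner] using this
  have hpos : (0 : ℝ) ≤ inner ℝ (∑ i, a i) (x - xbar) := by
    have := hnc x hx
    rw [inner_neg_left] at this
    linarith
  linarith
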